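/- Let λ > 0 and let f be analytic on the unit disk with f(0)=0, f'(0)=1. If |z² f''(z) + z f'(z) - f(z)| ≤ 3λ for all z in the disk, then |z f'(z) - f(z)| < λ for all z in the disk, i.e., f ∈ Ω_λ. -/

import Mathlib

open Metric Complex

-- double Schwarz
lemma double_schwarz {u : ℂ → ℂ} {M : ℝ}
    (hu : DifferentiableOn ℂ u (ball 0 1)) (h0 : u 0 = 0) (h1 : deriv u 0 = 0)
    (hb : ∀ z ∈ ball (0:ℂ) 1, ‖u z‖ ≤ M) :
    ∀ z ∈ ball (0:ℂ) 1, ‖u z‖ ≤ M * ‖z‖ ^ 2 := by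
  have hM : 0 ≤ M := le_trans (norm_nonneg _) (hb 0 (by simp))
  have key : ∀ (v : ℂ → ℂ), DifferentiableOn ℂ v (ball 0 1) → v 0 = 0 →
      (∀ z ∈ ball (0:ℂ) 1, ‖v z‖ ≤ M) →
      ∀ z ∈ ball (0:ℂ) 1, ‖dslope v 0 z‖ ≤ M := by
    intro v hv hv0 hvb z hz
    refine le_of_forall_pos_le_add fun ε hε => ?_
    have hmaps : Set.MapsTo v (ball 0 1) (ball (v 0) (M + ε)) := by
      intro w hw
      rw [mem_ball, hv0, dist_zero_right]
      exact lt_of_le_of_lt (hvb w hw) (by linarith)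
    have := Complex.norm_dslope_le_div_of_mapsTo_ball hv (hmaps.mono_right ball_subset_closedBall) hz
    simpa using this
  have step1 := key u hu h0 hb
  set d := dslope u 0 with hd_def
  have hd : DifferentiableOn ℂ d (ball 0 1) :=
    (Complex.differentiableOn_dslope (ball_mem_nhds _ one_pos)).mpr hu
  have hd0 : d 0 = 0 := by rw [hd_def, dslope_same, h1]
  have step2 := key d hd hd0 step1
  intro z hz
  rcases eq_or_ne z 0 with rfl | hz0
  · simp [h0]
  · have e1 : u z = z * d z := by
      rw [hd_def, dslope_of_ne u hz0, slope_def_field, h0]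
      field_simp
      ring
    have e2 : d z = z * dslope d 0 z := by
      rw [dslope_of_ne d hz0, slope_def_field, hd0]
      field_simp
      ring
    calc ‖u z‖ = ‖z‖ * (‖z‖ * ‖dslope d 0 z‖) := by
          rw [e1, e2]; simp [norm_mul]
      _ ≤ ‖z‖ * (‖z‖ * M) := by
          have := step2 z hz
          gcongr
      _ = M * ‖z‖ ^ 2 := by ring

theorem stmt_16 (lam : ℝ) (hlam : 0 < lam) (f : ℂ → ℂ)
    (hf : DifferentiableOn ℂ f (ball (0:ℂ) 1))
    (hf0 : f 0 = 0) (hf1 : deriv f 0 = 1)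
    (hb : ∀ z ∈ ball (0:ℂ) 1,
      ‖z ^ 2 * deriv (deriv f) z + z * deriv f z - f z‖ ≤ 3 * lam) :
    ∀ z ∈ ball (0:ℂ) 1, ‖z * deriv f z - f z‖ < lam := by
  set u : ℂ → ℂ := fun z => z ^ 2 * deriv (deriv f) z + z * deriv f z - f z with hu_def
  have hA : AnalyticOnNhd ℂ f (ball 0 1) := hf.analyticOnNhd isOpen_ball
  have hA1 : AnalyticOnNhd ℂ (deriv f) (ball 0 1) := hA.deriv
  have hA2 : AnalyticOnNhd ℂ (deriv (deriv f)) (ball 0 1) := hA1.deriv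
  have hu_diff : DifferentiableOn ℂ u (ball 0 1) := by
    apply DifferentiableOn.sub _ hf
    exact ((differentiable_pow 2).differentiableOn.mul hA2.differentiableOn).add
      (differentiableOn_id.mul hA1.differentiableOn)
  have hu0 : u 0 = 0 := by simp [hu_def, hf0]
  have hu'0 : deriv u 0 = 0 := by
    have d1 : DifferentiableAt ℂ (deriv (deriv f)) 0 :=
      (hA2 0 (by simp)).differentiableAt
    have d2 : DifferentiableAt ℂ (deriv f) 0 := (hA1 0 (by simp)).differentiableAt
    have d3 : DifferentiableAt ℂ f 0 := (hA 0 (by simp)).differentiableAt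
    have H := (((hasDerivAt_pow 2 (0:ℂ)).mul d1.hasDerivAt).add
      ((hasDerivAt_id (0:ℂ)).mul d2.hasDerivAt)).sub d3.hasDerivAt
    have := H.deriv
    exact this.trans (by simp)
  have husq := double_schwarz hu_diff hu0 hu'0 hb
  -- derivative of G
  have hG : ∀ w ∈ ball (0:ℂ) 1,
      HasDerivAt (fun w : ℂ => w ^ 2 * deriv f w - w * f w) (u w) w := by
    intro w hw
    have d2 : DifferentiableAt ℂ (deriv f) w := (hA1 w hw).differentiableAt
    have d3 : DifferentiableAt ℂ f w := (hA w hw).differentiableAt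
    have H : HasDerivAt (fun w : ℂ => w ^ 2 * deriv f w - w * f w) _ w :=
      ((hasDerivAt_pow 2 w).mul d2.hasDerivAt).sub
      ((hasDerivAt_id w).mul d3.hasDerivAt)
    convert H using 1
    have hdw : deriv f w = deriv f w := rfl
    simp only [hu_def, pow_one, Nat.cast_ofNat, id_eq]
    ring
  intro z hz
  rcases eq_or_ne z 0 with rfl | hz0
  · simpa [hf0] using hlam
  have hznorm : ‖z‖ < 1 := by simpa [mem_ball, dist_zero_right] using hz
  have hzpos : 0 < ‖z‖ := norm_pos_iff.mpr hz0
  have hmem : ∀ t : ℝ, t ∈ Set.uIcc (0:ℝ) 1 → (↑t * z) ∈ ball (0:ℂ) 1 := by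
    intro t ht
    rw [Set.uIcc_of_le zero_le_one] at ht
    rw [mem_ball, dist_zero_right, norm_mul, Complex.norm_real, Real.norm_eq_abs,
      _root_.abs_of_nonneg ht.1]
    calc t * ‖z‖ ≤ 1 * ‖z‖ := by nlinarith [ht.2]
      _ < 1 := by simpa using hznorm
  have hderiv : ∀ t ∈ Set.uIcc (0:ℝ) 1,
      HasDerivAt (fun t : ℝ => (↑t * z) ^ 2 * deriv f (↑t * z) - (↑t * z) * f (↑t * z))
        (u (↑t * z) * z) t := by
    intro t ht
    have h1 : HasDerivAt (fun s : ℂ => (s * z) ^ 2 * deriv f (s * z) - (s * z) * f (s * z))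
        (u (↑t * z) * z) ↑t := by
      have := (hG _ (hmem t ht)).comp (↑t : ℂ) ((hasDerivAt_id ((t:ℂ))).mul_const z)
      simpa [Function.comp_def] using this
    exact h1.comp_ofReal
  have hint : IntervalIntegrable (fun t : ℝ => u (↑t * z) * z) MeasureTheory.volume 0 1 := by
    apply ContinuousOn.intervalIntegrable
    apply ContinuousOn.mul _ continuousOn_const
    exact hu_diff.continuousOn.comp
      ((Complex.continuous_ofReal.continuousOn).mul continuousOn_const) hmem
  have hFTC := intervalIntegral.integral_eq_sub_of_hasDerivAt hderiv hint
  have hval : z ^ 2 * deriv f z - z * f z = ∫ t in (0:ℝ)..1, u (↑t * z) * z := by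
    rw [hFTC]; simp [hf0]
  have hbound : ‖∫ t in (0:ℝ)..1, u (↑t * z) * z‖ ≤
      |∫ t in (0:ℝ)..1, 3 * lam * ‖z‖ ^ 3 * t ^ 2| := by
    apply intervalIntegral.norm_integral_le_abs_of_norm_le
    · refine MeasureTheory.ae_restrict_of_forall_mem measurableSet_uIoc ?_
      intro t ht
      have ht' : t ∈ Set.uIcc (0:ℝ) 1 := Set.uIoc_subset_uIcc ht
      have ht0 : 0 ≤ t := by
        rw [Set.uIoc_of_le zero_le_one] at ht; exact ht.1.le
      have := husq _ (hmem t ht')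
      rw [norm_mul]
      have hnz : ‖(↑t * z : ℂ)‖ = t * ‖z‖ := by
        rw [norm_mul, Complex.norm_real, Real.norm_eq_abs, _root_.abs_of_nonneg ht0]
      rw [hnz] at this
      calc ‖u (↑t * z)‖ * ‖z‖ ≤ 3 * lam * (t * ‖z‖) ^ 2 * ‖z‖ := by
            nlinarith [norm_nonneg z]
        _ = 3 * lam * ‖z‖ ^ 3 * t ^ 2 := by ring
    · apply IntervalIntegrable.const_mul
      exact intervalIntegral.intervalIntegrable_pow 2
  have hcomp : (∫ t in (0:ℝ)..1, 3 * lam * ‖z‖ ^ 3 * t ^ 2) = lam * ‖z‖ ^ 3 := by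
    rw [intervalIntegral.integral_const_mul, integral_pow]
    norm_num; ring
  have hfin : ‖z‖ * ‖z * deriv f z - f z‖ ≤ lam * ‖z‖ ^ 3 := by
    have : z ^ 2 * deriv f z - z * f z = z * (z * deriv f z - f z) := by ring
    rw [← norm_mul, ← this, hval]
    rw [hcomp] at hbound
    refine hbound.trans ?_
    rw [_root_.abs_of_nonneg (by positivity)]
  have : ‖z * deriv f z - f z‖ ≤ lam * ‖z‖ ^ 2 := by
    rw [← mul_le_mul_iff_right₀ hzpos]
    calc ‖z‖ * ‖z * deriv f z - f z‖ ≤ lam * ‖z‖ ^ 3 := hfin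
      _ = ‖z‖ * (lam * ‖z‖ ^ 2) := by ring
  calc ‖z * deriv f z - f z‖ ≤ lam * ‖z‖ ^ 2 := this
    _ < lam * 1 := by
        have h2 : ‖z‖ ^ 2 < 1 := by nlinarith
        exact mul_lt_mul_of_pos_left h2 hlam
    _ = lam := mul_one lam
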